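/- Let ξ be a limit ordinal and suppose that for every ζ < ξ there are ordinals ξ_{0,ζ} and ξ_{1,ζ} with ξ_{0,ζ} ⊕ ξ_{1,ζ} = ζ + 1, where ⊕ denotes the Hessenberg (natural) sum. Then there exist a set S ⊆ [0, ξ), ordinals ξ₀ and ξ₁ with ξ₀ ⊕ ξ₁ = ξ, and ε ∈ {0, 1} such that ξ_ε is a limit ordinal, sup_{ζ∈S} ξ_{ε,ζ} ≥ ξ_ε, and ξ_{1−ε,ζ} ≥ ξ_{1−ε} for every ζ ∈ S. -/

import Mathlib

namespace Ordinal

universe u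

/-- `Ordinal.IsLimit` as in the older Mathlib (removed since): a nonzero ordinal closed
under successor. -/
def IsLimit (o : Ordinal) : Prop := o ≠ 0 ∧ ∀ a < o, Order.succ a < o

/-- Natural (Hessenberg) addition, with the definition of the older Mathlib
(`Mathlib.SetTheory.Ordinal.NaturalOps`, removed since). -/
noncomputable def nadd : Ordinal.{u} → Ordinal.{u} → Ordinal.{u}
  | a, b =>
    max (blsub.{u, u} a fun a' _ => nadd a' b) (blsub.{u, u} b fun b' _ => nadd a b')
termination_by o₁ o₂ => (o₁, o₂)

end Ordinal

infixl:65 " ♯ " => Ordinal.nadd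

open Ordinal

namespace Ordinal

theorem isLimit_iff_isSuccLimit {o : Ordinal} : o.IsLimit ↔ Order.IsSuccLimit o := by
  rw [isSuccLimit_iff, Order.isSuccPrelimit_iff_succ_lt]; rfl

theorem IsLimit.pos {o : Ordinal} (h : o.IsLimit) : 0 < o := pos_iff_ne_zero.2 h.1

theorem IsLimit.succ_lt {o a : Ordinal} (h : o.IsLimit) (ha : a < o) : Order.succ a < o :=
  h.2 a ha

theorem isLimit_omega0 : (ω : Ordinal).IsLimit := isLimit_iff_isSuccLimit.2 isSuccLimit_omega0

theorem omega0_le_of_isLimit {o : Ordinal} (h : o.IsLimit) : ω ≤ o :=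
  omega0_le_of_isSuccLimit (isLimit_iff_isSuccLimit.1 h)

theorem isLimit_add (a : Ordinal) {b : Ordinal} (h : b.IsLimit) : (a + b).IsLimit :=
  isLimit_iff_isSuccLimit.2 (isSuccLimit_add a (isLimit_iff_isSuccLimit.1 h))

theorem isLimit_mul_left {a b : Ordinal} (l : a.IsLimit) (b0 : 0 < b) : (a * b).IsLimit :=
  isLimit_iff_isSuccLimit.2 (isSuccLimit_mul_left (isLimit_iff_isSuccLimit.1 l) b0)

theorem isLimit_add_iff {a b : Ordinal} :
    (a + b).IsLimit ↔ b.IsLimit ∨ b = 0 ∧ a.IsLimit := by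
  simp only [isLimit_iff_isSuccLimit]; exact isSuccLimit_add_iff

theorem nadd_def (a b : Ordinal.{u}) :
    a ♯ b = max (blsub.{u, u} a fun a' _ => a' ♯ b) (blsub.{u, u} b fun b' _ => a ♯ b') := by
  rw [nadd]

theorem lt_nadd_iff {a b c : Ordinal} :
    a < b ♯ c ↔ (∃ b' < b, a ≤ b' ♯ c) ∨ ∃ c' < c, a ≤ b ♯ c' := by
  rw [nadd_def]
  simp [lt_blsub_iff]

theorem nadd_le_iff {a b c : Ordinal} :
    b ♯ c ≤ a ↔ (∀ b' < b, b' ♯ c < a) ∧ ∀ c' < c, b ♯ c' < a := by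
  rw [nadd_def]
  simp [blsub_le_iff]

theorem nadd_lt_nadd_left {b c : Ordinal} (h : b < c) (a : Ordinal) : a ♯ b < a ♯ c :=
  lt_nadd_iff.2 (Or.inr ⟨b, h, le_rfl⟩)

theorem nadd_lt_nadd_right {b c : Ordinal} (h : b < c) (a : Ordinal) : b ♯ a < c ♯ a :=
  lt_nadd_iff.2 (Or.inl ⟨b, h, le_rfl⟩)

theorem nadd_le_nadd_left {b c : Ordinal} (h : b ≤ c) (a : Ordinal) : a ♯ b ≤ a ♯ c := by
  rcases lt_or_eq_of_le h with (h | rfl)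
  · exact (nadd_lt_nadd_left h a).le
  · exact le_rfl

theorem nadd_le_nadd_right {b c : Ordinal} (h : b ≤ c) (a : Ordinal) : b ♯ a ≤ c ♯ a := by
  rcases lt_or_eq_of_le h with (h | rfl)
  · exact (nadd_lt_nadd_right h a).le
  · exact le_rfl

theorem nadd_le_nadd {a b c d : Ordinal} (h₁ : a ≤ b) (h₂ : c ≤ d) : a ♯ c ≤ b ♯ d :=
  (nadd_le_nadd_right h₁ c).trans (nadd_le_nadd_left h₂ b)

theorem nadd_comm (a b : Ordinal) : a ♯ b = b ♯ a := by
  induction a using Ordinal.induction generalizing b with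
  | _ a IHa =>
    induction b using Ordinal.induction with
    | _ b IHb =>
      refine le_antisymm (nadd_le_iff.2 ⟨?_, ?_⟩) (nadd_le_iff.2 ⟨?_, ?_⟩)
      · intro a' ha'; rw [IHa a' ha']; exact nadd_lt_nadd_left ha' b
      · intro b' hb'; rw [IHb b' hb']; exact nadd_lt_nadd_right hb' a
      · intro b' hb'; rw [← IHb b' hb']; exact nadd_lt_nadd_left hb' a
      · intro a' ha'; rw [← IHa a' ha']; exact nadd_lt_nadd_right ha' b

theorem nadd_assoc (a b c : Ordinal) : a ♯ b ♯ c = a ♯ (b ♯ c) := by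
  induction a using Ordinal.induction generalizing b c with
  | _ a IHa =>
    induction b using Ordinal.induction generalizing c with
    | _ b IHb =>
      induction c using Ordinal.induction with
      | _ c IHc =>
        refine le_antisymm (nadd_le_iff.2 ⟨?_, ?_⟩) (nadd_le_iff.2 ⟨?_, ?_⟩)
        · intro d hd
          rcases lt_nadd_iff.1 hd with ⟨a', ha', hd'⟩ | ⟨b', hb', hd'⟩
          · calc d ♯ c ≤ a' ♯ b ♯ c := nadd_le_nadd_right hd' c
              _ = a' ♯ (b ♯ c) := IHa a' ha' b c
              _ < a ♯ (b ♯ c) := nadd_lt_nadd_right ha' _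
          · calc d ♯ c ≤ a ♯ b' ♯ c := nadd_le_nadd_right hd' c
              _ = a ♯ (b' ♯ c) := IHb b' hb' c
              _ < a ♯ (b ♯ c) := nadd_lt_nadd_left (nadd_lt_nadd_right hb' c) _
        · intro c' hc'
          rw [IHc c' hc']
          exact nadd_lt_nadd_left (nadd_lt_nadd_left hc' b) a
        · intro a' ha'
          rw [← IHa a' ha' b c]
          exact nadd_lt_nadd_right (nadd_lt_nadd_right ha' b) c
        · intro d hd
          rcases lt_nadd_iff.1 hd with ⟨b', hb', hd'⟩ | ⟨c', hc', hd'⟩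
          · calc a ♯ d ≤ a ♯ (b' ♯ c) := nadd_le_nadd_left hd' a
              _ = a ♯ b' ♯ c := (IHb b' hb' c).symm
              _ < a ♯ b ♯ c := nadd_lt_nadd_right (nadd_lt_nadd_left hb' a) c
          · calc a ♯ d ≤ a ♯ (b ♯ c') := nadd_le_nadd_left hd' a
              _ = a ♯ b ♯ c' := (IHc c' hc').symm
              _ < a ♯ b ♯ c := nadd_lt_nadd_left hc' _

theorem nadd_right_comm (a b c : Ordinal) : a ♯ b ♯ c = a ♯ c ♯ b := by
  rw [nadd_assoc, nadd_comm b, ← nadd_assoc]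

@[simp]
theorem nadd_zero (a : Ordinal) : a ♯ 0 = a := by
  induction a using Ordinal.induction with
  | _ a IH =>
    refine le_antisymm (nadd_le_iff.2 ⟨?_, ?_⟩) (le_of_forall_lt fun x hx => ?_)
    · intro a' ha'; rw [IH a' ha']; exact ha'
    · intro c' hc'; exact absurd hc' (not_lt.2 (zero_le : (0 : Ordinal) ≤ c'))
    · rw [← IH x hx]; exact nadd_lt_nadd_right hx 0

@[simp]
theorem zero_nadd (a : Ordinal) : 0 ♯ a = a := by rw [nadd_comm, nadd_zero]

theorem le_self_nadd {a b : Ordinal} : a ≤ a ♯ b := by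
  simpa using nadd_le_nadd_left (zero_le : (0 : Ordinal) ≤ b) a

@[simp]
theorem nadd_one (a : Ordinal) : a ♯ 1 = Order.succ a := by
  induction a using Ordinal.induction with
  | _ a IH =>
    refine le_antisymm (nadd_le_iff.2 ⟨?_, ?_⟩) (Order.succ_le_of_lt ?_)
    · intro a' ha'; rw [IH a' ha']; exact Order.succ_lt_succ ha'
    · intro c' hc'
      rw [Ordinal.lt_one_iff_zero.1 hc', nadd_zero]; exact Order.lt_succ a
    · simpa using nadd_lt_nadd_left (zero_lt_one' Ordinal) a

theorem nadd_succ (a b : Ordinal) : a ♯ Order.succ b = Order.succ (a ♯ b) := by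
  rw [← nadd_one (a ♯ b), nadd_assoc, nadd_one]

theorem succ_nadd (a b : Ordinal) : Order.succ a ♯ b = Order.succ (a ♯ b) := by
  rw [nadd_comm, nadd_succ, nadd_comm]

@[simp]
theorem nadd_nat (a : Ordinal) (n : ℕ) : a ♯ n = a + n := by
  induction n with
  | zero => simp
  | succ n hn =>
    rw [Nat.cast_succ, ← add_assoc, ← hn, Ordinal.add_one_eq_succ, Ordinal.add_one_eq_succ,
      nadd_succ]

theorem add_le_nadd (a b : Ordinal) : a + b ≤ a ♯ b := by
  induction b using Ordinal.induction with
  | _ b IH =>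
    refine le_of_forall_lt fun x hx => ?_
    rcases lt_or_ge x a with hxa | hxa
    · exact hxa.trans_le le_self_nadd
    · have hux : a + (x - a) = x := Ordinal.add_sub_cancel_of_le hxa
      have hu : x - a < b := by
        rw [← hux] at hx
        exact (add_lt_add_iff_left _).1 hx
      rw [← hux]
      exact (IH _ hu).trans_lt (nadd_lt_nadd_left hu a)

theorem nadd_left_cancel {a b c : Ordinal} (h : a ♯ b = a ♯ c) : b = c := by
  rcases lt_trichotomy b c with hbc | hbc | hbc
  · exact absurd h (nadd_lt_nadd_left hbc a).ne
  · exact hbc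
  · exact absurd h (nadd_lt_nadd_left hbc a).ne'

end Ordinal

/-- `W` is closed under natural addition. -/
def NaddClosed (W : Ordinal) : Prop := ∀ a b, a < W → b < W → a ♯ b < W

/-- Absorption: `(W*q) ♯ r = W*q + r` for `r < W`, given closure of `W`. -/
theorem nadd_mul_add_of_lt {W : Ordinal} (W0 : W ≠ 0) (hW : NaddClosed W) :
    ∀ q r, r < W → (W * q) ♯ r = W * q + r := by
  intro q
  induction q using Ordinal.induction with
  | _ q IHq =>
    intro r
    induction r using Ordinal.induction with
    | _ r IHr =>
      intro hr
      refine le_antisymm ?_ (add_le_nadd _ _)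
      refine nadd_le_iff.2 ⟨?_, ?_⟩
      · intro x hx
        have hq2 : x / W < q := (div_lt W0).2 hx
        have hr2 : x % W < W := mod_lt x W0
        calc x ♯ r ≤ ((W * (x / W)) ♯ (x % W)) ♯ r := by
              refine nadd_le_nadd_right ?_ r
              conv_lhs => rw [← div_add_mod x W]
              exact add_le_nadd _ _
          _ = (W * (x / W)) ♯ ((x % W) ♯ r) := nadd_assoc _ _ _
          _ = W * (x / W) + ((x % W) ♯ r) := IHq _ hq2 _ (hW _ _ hr2 hr)
          _ < W * (x / W) + W := add_lt_add_right (hW _ _ hr2 hr) _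
          _ = W * (x / W + 1) := by rw [mul_add, mul_one]
          _ ≤ W * q := mul_le_mul_right (by rwa [Ordinal.add_one_eq_succ, Order.succ_le_iff]) W
          _ ≤ W * q + r := le_self_add
      · intro r' hr'
        rw [IHr r' hr' (hr'.trans hr)]
        exact add_lt_add_right hr' _

/-- `(W*q) ♯ W = W*(q+1)`, given closure of `W`. -/
theorem nadd_mul_self {W : Ordinal} (W0 : W ≠ 0) (hW : NaddClosed W) :
    ∀ q, (W * q) ♯ W = W * (q + 1) := by
  intro q
  induction q using Ordinal.induction with
  | _ q IHq =>
    refine le_antisymm ?_ ?_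
    · refine nadd_le_iff.2 ⟨?_, ?_⟩
      · intro x hx
        have hq2 : x / W < q := (div_lt W0).2 hx
        have hr2 : x % W < W := mod_lt x W0
        calc x ♯ W ≤ ((W * (x / W)) ♯ (x % W)) ♯ W := by
              refine nadd_le_nadd_right ?_ W
              conv_lhs => rw [← div_add_mod x W]
              exact add_le_nadd _ _
          _ = ((W * (x / W)) ♯ W) ♯ (x % W) := nadd_right_comm _ _ _
          _ = (W * (x / W + 1)) ♯ (x % W) := by rw [IHq _ hq2]
          _ = W * (x / W + 1) + (x % W) := nadd_mul_add_of_lt W0 hW _ _ hr2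
          _ < W * (x / W + 1) + W := add_lt_add_right hr2 _
          _ = W * (x / W + 1 + 1) := by simp [mul_add, mul_one, mul_succ]
          _ ≤ W * (q + 1) := by
              refine mul_le_mul_right (add_le_add_left ?_ 1) W
              rwa [Ordinal.add_one_eq_succ, Order.succ_le_iff]
      · intro y hy
        rw [nadd_mul_add_of_lt W0 hW q y hy, mul_add, mul_one]
        exact add_lt_add_right hy _
    · rw [mul_add, mul_one]
      exact add_le_nadd _ _

/-- `(W*q) ♯ (W*q') = W*(q ♯ q')`, given closure of `W`. -/
theorem nadd_mul_mul {W : Ordinal} (W0 : W ≠ 0) (hW : NaddClosed W) :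
    ∀ q q', (W * q) ♯ (W * q') = W * (q ♯ q') := by
  intro q
  induction q using Ordinal.induction with
  | _ q IHq =>
    intro q'
    induction q' using Ordinal.induction with
    | _ q' IHq' =>
      refine le_antisymm ?_ ?_
      · refine nadd_le_iff.2 ⟨?_, ?_⟩
        · intro x hx
          have hq2 : x / W < q := (div_lt W0).2 hx
          have hr2 : x % W < W := mod_lt x W0
          calc x ♯ (W * q') ≤ ((W * (x / W)) ♯ (x % W)) ♯ (W * q') := by
                refine nadd_le_nadd_right ?_ _
                conv_lhs => rw [← div_add_mod x W]
                exact add_le_nadd _ _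
            _ = ((W * (x / W)) ♯ (W * q')) ♯ (x % W) := nadd_right_comm _ _ _
            _ = (W * (x / W ♯ q')) ♯ (x % W) := by rw [IHq _ hq2]
            _ = W * (x / W ♯ q') + (x % W) := nadd_mul_add_of_lt W0 hW _ _ hr2
            _ < W * (x / W ♯ q') + W := add_lt_add_right hr2 _
            _ = W * (x / W ♯ q' + 1) := by rw [mul_add, mul_one]
            _ ≤ W * (q ♯ q') := by
                refine mul_le_mul_right ?_ W
                rw [Ordinal.add_one_eq_succ, Order.succ_le_iff]
                exact nadd_lt_nadd_right hq2 q'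
        · intro y hy
          have hq2 : y / W < q' := (div_lt W0).2 hy
          have hr2 : y % W < W := mod_lt y W0
          calc (W * q) ♯ y ≤ (W * q) ♯ ((W * (y / W)) ♯ (y % W)) := by
                refine nadd_le_nadd_left ?_ _
                conv_lhs => rw [← div_add_mod y W]
                exact add_le_nadd _ _
            _ = ((W * q) ♯ (W * (y / W))) ♯ (y % W) := (nadd_assoc _ _ _).symm
            _ = (W * (q ♯ y / W)) ♯ (y % W) := by rw [IHq' _ hq2]
            _ = W * (q ♯ y / W) + (y % W) := nadd_mul_add_of_lt W0 hW _ _ hr2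
            _ < W * (q ♯ y / W) + W := add_lt_add_right hr2 _
            _ = W * (q ♯ y / W + 1) := by rw [mul_add, mul_one]
            _ ≤ W * (q ♯ q') := by
                refine mul_le_mul_right ?_ W
                rw [Ordinal.add_one_eq_succ, Order.succ_le_iff]
                exact nadd_lt_nadd_left hq2 q
      · refine le_of_forall_lt fun w hw => ?_
        have hs : w / W < q ♯ q' := (div_lt W0).2 hw
        have hw' : w < W * (w / W) + W :=
          calc w = W * (w / W) + w % W := (div_add_mod w W).symm
            _ < W * (w / W) + W := add_lt_add_right (mod_lt w W0) _
        rcases lt_nadd_iff.1 hs with ⟨q2, hq2, hsle⟩ | ⟨q2, hq2, hsle⟩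
        · calc w < W * (w / W) + W := hw'
            _ ≤ W * (q2 ♯ q') + W := by
                refine add_le_add_left (mul_le_mul_right hsle W) W
            _ = ((W * q2) ♯ (W * q')) + W := by rw [IHq _ hq2]
            _ ≤ ((W * q2) ♯ (W * q')) ♯ W := add_le_nadd _ _
            _ = ((W * q2) ♯ W) ♯ (W * q') := nadd_right_comm _ _ _
            _ = (W * (q2 + 1)) ♯ (W * q') := by rw [nadd_mul_self W0 hW]
            _ ≤ (W * q) ♯ (W * q') := by
                refine nadd_le_nadd_right (mul_le_mul_right ?_ W) _
                rwa [Ordinal.add_one_eq_succ, Order.succ_le_iff]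
        · calc w < W * (w / W) + W := hw'
            _ ≤ W * (q ♯ q2) + W := by
                refine add_le_add_left (mul_le_mul_right hsle W) W
            _ = ((W * q) ♯ (W * q2)) + W := by rw [IHq' _ hq2]
            _ ≤ ((W * q) ♯ (W * q2)) ♯ W := add_le_nadd _ _
            _ = (W * q) ♯ ((W * q2) ♯ W) := nadd_assoc _ _ _
            _ = (W * q) ♯ (W * (q2 + 1)) := by rw [nadd_mul_self W0 hW]
            _ ≤ (W * q) ♯ (W * q') := by
                refine nadd_le_nadd_left (mul_le_mul_right ?_ W) _
                rwa [Ordinal.add_one_eq_succ, Order.succ_le_iff]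

/-- Full splitting identity. -/
theorem nadd_split {W : Ordinal} (W0 : W ≠ 0) (hW : NaddClosed W) {r r' : Ordinal}
    (q q' : Ordinal) (hr : r < W) (hr' : r' < W) :
    (W * q + r) ♯ (W * q' + r') = W * (q ♯ q') + (r ♯ r') := by
  rw [← nadd_mul_add_of_lt W0 hW q r hr, ← nadd_mul_add_of_lt W0 hW q' r' hr',
    ← nadd_mul_add_of_lt W0 hW (q ♯ q') (r ♯ r') (hW r r' hr hr'),
    ← nadd_mul_mul W0 hW]
  rw [nadd_assoc, nadd_comm r, nadd_assoc, ← nadd_assoc, nadd_comm r', nadd_assoc]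

theorem naddClosed_omega0 : NaddClosed ω := by
  intro a b ha hb
  obtain ⟨m, rfl⟩ := lt_omega0.1 ha
  obtain ⟨n, rfl⟩ := lt_omega0.1 hb
  rw [nadd_nat, ← Nat.cast_add]
  exact nat_lt_omega0 _

/-- `ω^γ` is closed under natural addition. -/
theorem naddClosed_omega0_opow : ∀ γ : Ordinal, NaddClosed (ω ^ γ) := by
  intro γ
  induction γ using Ordinal.induction with
  | _ γ IH =>
    intro a b ha hb
    rcases eq_or_ne a 0 with rfl | ha0
    · simpa using hb
    rcases eq_or_ne b 0 with rfl | hb0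
    · simpa using ha
    set e : Ordinal := max (log ω a) (log ω b) with he
    have hae : a < ω ^ (e + 1) := by
      refine (lt_opow_succ_log_self one_lt_omega0 a).trans_le ?_
      rw [Ordinal.add_one_eq_succ]
      exact opow_le_opow_right omega0_pos (Order.succ_le_succ (le_max_left _ _))
    have hbe : b < ω ^ (e + 1) := by
      refine (lt_opow_succ_log_self one_lt_omega0 b).trans_le ?_
      rw [Ordinal.add_one_eq_succ]
      exact opow_le_opow_right omega0_pos (Order.succ_le_succ (le_max_right _ _))
    have heγ : e + 1 ≤ γ := by
      rw [Ordinal.add_one_eq_succ, Order.succ_le_iff]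
      have h1 : log ω a < γ :=
        (opow_lt_opow_iff_right one_lt_omega0).1 ((opow_log_le_self ω ha0).trans_lt ha)
      have h2 : log ω b < γ :=
        (opow_lt_opow_iff_right one_lt_omega0).1 ((opow_log_le_self ω hb0).trans_lt hb)
      exact max_lt h1 h2
    rcases lt_or_eq_of_le heγ with hlt | rfl
    · exact (IH _ hlt a b hae hbe).trans_le (opow_le_opow_right omega0_pos hlt.le)
    rcases eq_or_ne e 0 with he0 | he0
    · rw [he0, zero_add, opow_one] at hae hbe ⊢
      exact naddClosed_omega0 a b hae hbe
    · set W : Ordinal := ω ^ e with hWdef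
      have W0 : W ≠ 0 := (opow_pos e omega0_pos).ne'
      have hCl : NaddClosed W := IH e (lt_add_one e)
      have hWω : ω ^ (e + 1) = W * ω := by rw [opow_add, opow_one]
      have hqa : a / W < ω := (div_lt W0).2 (by rwa [← hWω])
      have hqb : b / W < ω := (div_lt W0).2 (by rwa [← hWω])
      have hra : a % W < W := mod_lt a W0
      have hrb : b % W < W := mod_lt b W0
      have hq : a / W ♯ b / W < ω := naddClosed_omega0 _ _ hqa hqb
      have hsplit : a ♯ b = W * (a / W ♯ b / W) + (a % W ♯ b % W) := by
        conv_lhs => rw [← div_add_mod a W, ← div_add_mod b W]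
        exact nadd_split W0 hCl _ _ hra hrb
      rw [hsplit, hWω]
      calc W * (a / W ♯ b / W) + (a % W ♯ b % W)
          < W * (a / W ♯ b / W) + W := add_lt_add_right (hCl _ _ hra hrb) _
        _ = W * (a / W ♯ b / W + 1) := by rw [mul_add, mul_one]
        _ < W * ω := by
            refine (mul_lt_mul_iff_of_pos_left (pos_iff_ne_zero.2 W0)).2 ?_
            rw [Ordinal.add_one_eq_succ]
            exact isLimit_omega0.succ_lt hq

theorem mul_add_eq_mul_add_iff {W x y u v : Ordinal} (W0 : W ≠ 0)
    (hu : u < W) (hv : v < W) (h : W * x + u = W * y + v) : x = y ∧ u = v := by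
  have hx : (W * x + u) / W = x := by
    rw [mul_add_div _ W0, div_eq_zero_of_lt hu, add_zero]
  have hy : (W * y + v) / W = y := by
    rw [mul_add_div _ W0, div_eq_zero_of_lt hv, add_zero]
  have hxy : x = y := by rw [← hx, ← hy, h]
  refine ⟨hxy, ?_⟩
  rw [hxy] at h
  exact add_left_cancel_iff.1 h

/-- The set of left summands in natural-sum decompositions of `c` is finite. -/
theorem finite_nadd_decomp : ∀ c : Ordinal, {a : Ordinal | ∃ b, a ♯ b = c}.Finite := by
  intro c
  induction c using Ordinal.induction with
  | _ c IH =>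
    rcases eq_or_ne c 0 with rfl | hc0
    · refine Set.Finite.subset (Set.finite_singleton 0) ?_
      rintro a ⟨b, hab⟩
      have : a ≤ 0 := hab ▸ le_self_nadd
      simpa using this
    · set W : Ordinal := ω ^ log ω c with hWdef
      have W0 : W ≠ 0 := (opow_pos _ omega0_pos).ne'
      have hCl : NaddClosed W := naddClosed_omega0_opow _
      have hn : c / W < ω := div_opow_log_lt c one_lt_omega0
      obtain ⟨N, hN⟩ := lt_omega0.1 hn
      have hs : c % W < c := mod_opow_log_lt_self ω hc0
      have key : {a : Ordinal | ∃ b, a ♯ b = c} ⊆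
          (fun p : Ordinal × Ordinal => W * p.1 + p.2) ''
            ((Nat.cast '' (Set.Iic N)) ×ˢ {r : Ordinal | ∃ r', r ♯ r' = c % W}) := by
        rintro a ⟨b, hab⟩
        have hra : a % W < W := mod_lt a W0
        have hrb : b % W < W := mod_lt b W0
        have hsplit : c = W * (a / W ♯ b / W) + (a % W ♯ b % W) := by
          conv_lhs => rw [← hab, ← div_add_mod a W, ← div_add_mod b W]
          exact nadd_split W0 hCl _ _ hra hrb
        have hc' : W * (c / W) + c % W = c := div_add_mod c W
        obtain ⟨hq, hr⟩ := mul_add_eq_mul_add_iff W0 (hCl _ _ hra hrb) (mod_lt c W0)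
          (hsplit.symm.trans hc'.symm)
        have hqa : a / W ≤ (N : Ordinal) := by
          rw [← hN, ← hq]; exact le_self_nadd
        obtain ⟨m, hm⟩ := lt_omega0.1 (hqa.trans_lt (nat_lt_omega0 N))
        refine ⟨(a / W, a % W), ⟨⟨m, ?_, hm.symm⟩, ⟨b % W, hr⟩⟩, div_add_mod a W⟩
        simpa [hm, Nat.cast_le] using hqa
      refine Set.Finite.subset (Set.Finite.image _ (Set.Finite.prod ?_ (IH _ hs))) key
      exact (Set.finite_Iic N).image _

/-- Every limit ordinal has the form `ω^γ * q + ω^γ` with `γ ≠ 0`. -/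
theorem isLimit_decomp : ∀ ξ : Ordinal, ξ.IsLimit → ∃ γ q : Ordinal, γ ≠ 0 ∧ ξ = ω ^ γ * q + ω ^ γ := by
  intro ξ
  induction ξ using Ordinal.induction with
  | _ ξ IH =>
    intro hξ
    have hξ0 : ξ ≠ 0 := hξ.pos.ne'
    set L : Ordinal := log ω ξ with hL
    set W : Ordinal := ω ^ L with hWdef
    have W0 : W ≠ 0 := (opow_pos _ omega0_pos).ne'
    have hdm : W * (ξ / W) + ξ % W = ξ := div_add_mod ξ W
    have hn : ξ / W < ω := div_opow_log_lt ξ one_lt_omega0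
    have hn0 : ξ / W ≠ 0 := by
      intro h0
      rw [h0, mul_zero, zero_add] at hdm
      have hxw : ξ < W := by rw [← hdm]; exact mod_lt ξ W0
      exact absurd hxw (not_lt.2 (opow_log_le_self ω hξ0))
    have hL0 : L ≠ 0 := by
      intro h0
      have h := hn
      rw [hWdef, h0, opow_zero, Ordinal.div_one] at h
      exact absurd h (not_lt.2 (omega0_le_of_isLimit hξ))
    obtain ⟨N, hN⟩ := lt_omega0.1 hn
    rcases eq_or_ne (ξ % W) 0 with hs0 | hs0
    · obtain ⟨M, hM⟩ := Nat.exists_eq_succ_of_ne_zero (n := N) (by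
        rintro rfl
        exact hn0 (by simpa using hN))
      refine ⟨L, (M : Ordinal), hL0, ?_⟩
      rw [← hdm, hs0, add_zero, hN, hM]
      have : ((M + 1 : ℕ) : Ordinal) = (M : Ordinal) + 1 := by push_cast; rfl
      rw [Nat.succ_eq_add_one, this, mul_add, mul_one]
    · have hslim : (ξ % W).IsLimit := by
        have h := hξ
        rw [← hdm] at h
        rcases isLimit_add_iff.1 h with h' | ⟨h', _⟩
        · exact h'
        · exact absurd h' hs0
      obtain ⟨γ, q, hγ0, hsq⟩ := IH _ (mod_opow_log_lt_self ω hξ0) hslim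
      have hγL : γ < L := by
        refine (opow_lt_opow_iff_right one_lt_omega0).1 ?_
        calc ω ^ γ ≤ ω ^ γ * q + ω ^ γ := le_add_self
          _ = ξ % W := hsq.symm
          _ < W := mod_lt ξ W0
      have hWγ : W = ω ^ γ * ω ^ (L - γ) := by
        rw [hWdef, ← opow_add, Ordinal.add_sub_cancel_of_le hγL.le]
      refine ⟨γ, ω ^ (L - γ) * (ξ / W) + q, hγ0, ?_⟩
      calc ξ = W * (ξ / W) + ξ % W := hdm.symm
        _ = ω ^ γ * (ω ^ (L - γ) * (ξ / W)) + (ω ^ γ * q + ω ^ γ) := by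
            rw [hsq, hWγ, mul_assoc]
        _ = ω ^ γ * (ω ^ (L - γ) * (ξ / W) + q) + ω ^ γ := by
            rw [mul_add, add_assoc]

theorem le_sSup_image_of_mod_sup {W p : Ordinal} {C : Set Ordinal} (f : Ordinal → Ordinal)
    (hCne : C.Nonempty)
    (hf : ∀ ζ ∈ C, f ζ = W * p + f ζ % W)
    (hfR : ∀ ζ ∈ C, f ζ % W < W)
    (hT : W ≤ sSup ((fun ζ => f ζ % W) '' C)) :
    W * p + W ≤ sSup (f '' C) := by
  have hbdd : BddAbove (f '' C) := by
    refine ⟨W * p + W, ?_⟩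
    rintro _ ⟨ζ, hζ, rfl⟩
    rw [hf ζ hζ]
    exact (add_lt_add_right (hfR ζ hζ) _).le
  refine le_of_forall_lt fun x hx => ?_
  rcases lt_or_ge x (W * p) with hxp | hxp
  · obtain ⟨ζ, hζ⟩ := hCne
    have h1 : W * p ≤ f ζ := by
      rw [hf ζ hζ]; exact le_self_add
    exact hxp.trans_le (h1.trans (le_csSup hbdd ⟨ζ, hζ, rfl⟩))
  · have hux : W * p + (x - W * p) = x := Ordinal.add_sub_cancel_of_le hxp
    have hu : x - W * p < W := by
      rw [← hux] at hx
      exact (add_lt_add_iff_left _).1 hx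
    obtain ⟨y, ⟨ζ, hζ, rfl⟩, hy⟩ := exists_lt_of_lt_csSup (hCne.image _) (hu.trans_le hT)
    calc x = W * p + (x - W * p) := hux.symm
      _ < W * p + f ζ % W := add_lt_add_right hy _
      _ = f ζ := (hf ζ hζ).symm
      _ ≤ sSup (f '' C) := le_csSup hbdd ⟨ζ, hζ, rfl⟩

/-- Proposition 3.7 of the paper, from [Causey]: a pigeonhole
principle for Hessenberg decompositions `ξ_{0,ζ} ⊕ ξ_{1,ζ} = ζ + 1` at a limit
ordinal `ξ`. -/
theorem statement15 (ξ : Ordinal) (hξ : ξ.IsLimit)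
    (f0 f1 : Ordinal → Ordinal)
    (h : ∀ ζ < ξ, f0 ζ ♯ f1 ζ = ζ + 1) :
    ∃ S : Set Ordinal, S ⊆ Set.Iio ξ ∧
      ∃ ξ₀ ξ₁ : Ordinal, ξ₀ ♯ ξ₁ = ξ ∧
        ((ξ₀.IsLimit ∧ ξ₀ ≤ sSup (f0 '' S) ∧ ∀ ζ ∈ S, ξ₁ ≤ f1 ζ) ∨
         (ξ₁.IsLimit ∧ ξ₁ ≤ sSup (f1 '' S) ∧ ∀ ζ ∈ S, ξ₀ ≤ f0 ζ)) := by
  obtain ⟨γ, q', hγ0, hdecomp⟩ := isLimit_decomp ξ hξ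
  set W : Ordinal := ω ^ γ with hWdef
  have W0 : W ≠ 0 := (opow_pos _ omega0_pos).ne'
  have hCl : NaddClosed W := naddClosed_omega0_opow γ
  have hWlim : W.IsLimit := by
    have h1 : (1 : Ordinal) + (γ - 1) = γ :=
      Ordinal.add_sub_cancel_of_le (Ordinal.one_le_iff_ne_zero.2 hγ0)
    rw [hWdef, ← h1, opow_add, opow_one]
    exact isLimit_mul_left isLimit_omega0 (opow_pos _ omega0_pos)
  have hΞξ : W * q' < ξ := by
    rw [hdecomp]
    simpa using add_lt_add_right hWlim.pos (W * q')
  -- key dividing fact for every ζ in [W*q', ξ)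
  have key : ∀ ζ, W * q' ≤ ζ → ζ < ξ →
      (f0 ζ / W) ♯ (f1 ζ / W) = q' ∧
      (f0 ζ % W) ♯ (f1 ζ % W) = (ζ + 1) - W * q' := by
    intro ζ hζl hζu
    have hζ1 : ζ + 1 < ξ := by
      rw [Ordinal.add_one_eq_succ]
      exact hξ.succ_lt hζu
    have hle1 : W * q' ≤ ζ + 1 := hζl.trans (le_self_add)
    have hδ : W * q' + ((ζ + 1) - W * q') = ζ + 1 := Ordinal.add_sub_cancel_of_le hle1
    have hδW : (ζ + 1) - W * q' < W := by
      have h2 : ζ + 1 < W * q' + W := hdecomp ▸ hζ1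
      rw [← hδ] at h2
      exact (add_lt_add_iff_left _).1 h2
    have hra : f0 ζ % W < W := mod_lt _ W0
    have hrb : f1 ζ % W < W := mod_lt _ W0
    have hsplit : W * ((f0 ζ / W) ♯ (f1 ζ / W)) + ((f0 ζ % W) ♯ (f1 ζ % W))
        = W * q' + ((ζ + 1) - W * q') := by
      rw [hδ, ← h ζ hζu]
      conv_rhs => rw [← div_add_mod (f0 ζ) W, ← div_add_mod (f1 ζ) W]
      exact (nadd_split W0 hCl _ _ hra hrb).symm
    exact mul_add_eq_mul_add_iff W0 (hCl _ _ hra hrb) hδW hsplit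
  -- pigeonhole: some quotient value occurs cofinally
  have hpigeon : ∃ p, ∀ β < ξ, ∃ ζ, β ≤ ζ ∧ W * q' ≤ ζ ∧ ζ < ξ ∧ f0 ζ / W = p := by
    by_contra hcon
    push_neg at hcon
    choose β hβξ hβ using hcon
    set F : Set Ordinal := {a : Ordinal | ∃ b, a ♯ b = q'} with hF
    have hFfin : F.Finite := finite_nadd_decomp q'
    have hFne : F.Nonempty := by
      refine ⟨f0 (W * q') / W, f1 (W * q') / W, ?_⟩
      exact (key (W * q') le_rfl hΞξ).1
    have hBmem : sSup (β '' F) ∈ β '' F :=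
      (hFne.image β).csSup_mem (hFfin.image β)
    have hBξ : sSup (β '' F) < ξ := by
      obtain ⟨p₀, _, hEq⟩ := hBmem
      rw [← hEq]
      exact hβξ p₀
    set ζ₁ : Ordinal := max (sSup (β '' F)) (W * q') with hζ₁
    have hζ₁ξ : ζ₁ < ξ := max_lt hBξ hΞξ
    have hpF : f0 ζ₁ / W ∈ F :=
      ⟨f1 ζ₁ / W, (key ζ₁ (le_max_right _ _) hζ₁ξ).1⟩
    refine hβ (f0 ζ₁ / W) ζ₁ ?_ (le_max_right _ _) hζ₁ξ rfl
    exact (le_csSup (hFfin.image β).bddAbove ⟨_, hpF, rfl⟩).trans (le_max_left _ _)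
  obtain ⟨p, hp⟩ := hpigeon
  set C : Set Ordinal := {ζ | W * q' ≤ ζ ∧ ζ < ξ ∧ f0 ζ / W = p} with hC
  have hCcof : ∀ β < ξ, ∃ ζ ∈ C, β ≤ ζ := by
    intro β hβ
    obtain ⟨ζ, h1, h2, h3, h4⟩ := hp β hβ
    exact ⟨ζ, ⟨h2, h3, h4⟩, h1⟩
  obtain ⟨ζs, hζs⟩ : C.Nonempty := by
    obtain ⟨ζ, hζ, _⟩ := hCcof 0 hξ.pos
    exact ⟨ζ, hζ⟩
  set p1 : Ordinal := f1 ζs / W with hp1def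
  have hq' : p ♯ p1 = q' := by
    have := (key ζs hζs.1 hζs.2.1).1
    rwa [hζs.2.2] at this
  have hp1 : ∀ ζ ∈ C, f1 ζ / W = p1 := by
    intro ζ hζ
    have h1 := (key ζ hζ.1 hζ.2.1).1
    rw [hζ.2.2] at h1
    exact nadd_left_cancel (h1.trans hq'.symm)
  have hCsub : C ⊆ Set.Iio ξ := fun ζ hζ => hζ.2.1
  -- the two suprema of remainders
  have hTdich : W ≤ sSup ((fun ζ => f0 ζ % W) '' C) ∨
      W ≤ sSup ((fun ζ => f1 ζ % W) '' C) := by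
    by_contra hcon
    push_neg at hcon
    obtain ⟨hT0, hT1⟩ := hcon
    have hu : sSup ((fun ζ => f0 ζ % W) '' C) ♯ sSup ((fun ζ => f1 ζ % W) '' C) < W :=
      hCl _ _ hT0 hT1
    set u := sSup ((fun ζ => f0 ζ % W) '' C) ♯ sSup ((fun ζ => f1 ζ % W) '' C) with hudef
    have hβξ : W * q' + u < ξ := by
      rw [hdecomp]
      exact add_lt_add_right hu _
    obtain ⟨ζ, hζ, hβζ⟩ := hCcof (W * q' + u) hβξ
    have hkey := (key ζ hζ.1 hζ.2.1).2
    have hδ : W * q' + ((ζ + 1) - W * q') = ζ + 1 :=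
      Ordinal.add_sub_cancel_of_le (hζ.1.trans (le_self_add))
    -- δ ≤ u
    have hbdd0 : BddAbove ((fun ζ => f0 ζ % W) '' C) := by
      refine ⟨W, ?_⟩; rintro _ ⟨ζ', _, rfl⟩; exact (mod_lt _ W0).le
    have hbdd1 : BddAbove ((fun ζ => f1 ζ % W) '' C) := by
      refine ⟨W, ?_⟩; rintro _ ⟨ζ', _, rfl⟩; exact (mod_lt _ W0).le
    have hδu : (ζ + 1) - W * q' ≤ u := by
      rw [← hkey, hudef]
      exact nadd_le_nadd (le_csSup hbdd0 ⟨ζ, hζ, rfl⟩) (le_csSup hbdd1 ⟨ζ, hζ, rfl⟩)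
    -- δ > u
    have hδu' : u < (ζ + 1) - W * q' := by
      have h2 : W * q' + u < W * q' + ((ζ + 1) - W * q') := by
        rw [hδ]
        calc W * q' + u ≤ ζ := hβζ
          _ < ζ + 1 := lt_add_one ζ
      exact (add_lt_add_iff_left _).1 h2
    exact absurd hδu (not_le.2 hδu')
  have hf0C : ∀ ζ ∈ C, f0 ζ = W * p + f0 ζ % W := by
    intro ζ hζ
    rw [← hζ.2.2]
    exact (div_add_mod _ _).symm
  have hf1C : ∀ ζ ∈ C, f1 ζ = W * p1 + f1 ζ % W := by
    intro ζ hζ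
    rw [← hp1 ζ hζ]
    exact (div_add_mod _ _).symm
  have hmod : ∀ (g : Ordinal → Ordinal), ∀ ζ ∈ C, g ζ % W < W := fun g ζ _ => mod_lt _ W0
  rcases hTdich with hT | hT
  · -- ε = 0 branch
    refine ⟨C, hCsub, W * p + W, W * p1, ?_, Or.inl ⟨isLimit_add _ hWlim, ?_, ?_⟩⟩
    · calc (W * p + W) ♯ (W * p1) = (W * (p + 1)) ♯ (W * p1) := by rw [mul_add, mul_one]
        _ = W * ((p + 1) ♯ p1) := nadd_mul_mul W0 hCl _ _
        _ = W * (q' + 1) := by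
            rw [Ordinal.add_one_eq_succ, Ordinal.add_one_eq_succ, succ_nadd, hq']
        _ = ξ := by rw [mul_add, mul_one, hdecomp]
    · exact le_sSup_image_of_mod_sup f0 ⟨ζs, hζs⟩ hf0C (hmod f0) hT
    · intro ζ hζ
      rw [hf1C ζ hζ]
      exact le_self_add
  · -- ε = 1 branch
    refine ⟨C, hCsub, W * p, W * p1 + W, ?_, Or.inr ⟨isLimit_add _ hWlim, ?_, ?_⟩⟩
    · calc (W * p) ♯ (W * p1 + W) = (W * p1 + W) ♯ (W * p) := nadd_comm _ _
        _ = (W * (p1 + 1)) ♯ (W * p) := by rw [mul_add, mul_one]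
        _ = W * ((p1 + 1) ♯ p) := nadd_mul_mul W0 hCl _ _
        _ = W * (q' + 1) := by
            rw [Ordinal.add_one_eq_succ, Ordinal.add_one_eq_succ, succ_nadd,
              nadd_comm, hq']
        _ = ξ := by rw [mul_add, mul_one, hdecomp]
    · exact le_sSup_image_of_mod_sup f1 ⟨ζs, hζs⟩ hf1C (hmod f1) hT
    · intro ζ hζ
      rw [hf0C ζ hζ]
      exact le_self_add
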